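/- arXiv:1103.3986 — 2 statements merged into one kernel-verified Lean document; each statement's English description precedes it below -/
import Mathlib

section
/- For every integer k ≥ 4, setting ℓ = ⌊√k / 2⌋, one has the inequality (2k/(k + 2ℓ + 1)) · ((2ℓ+1)/(ℓ+1)) > 4 - 8/√k. -/
/-- For every integer `k ≥ 4`, with `ℓ = ⌊√k / 2⌋`, one has
`(2k/(k+2ℓ+1))·((2ℓ+1)/(ℓ+1)) > 4 - 8/√k`. -/
theorem main_term_factor_lower_bound (k : ℕ) (hk : 4 ≤ k)
    (ℓ : ℕ) (hℓ : ℓ = ⌊Real.sqrt k / 2⌋₊) :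
    (4 : ℝ) - 8 / Real.sqrt k <
      (2 * k / (k + 2 * ℓ + 1)) * ((2 * ℓ + 1) / (ℓ + 1)) := by
  have hk' : (4:ℝ) ≤ (k:ℝ) := by exact_mod_cast hk
  set s := Real.sqrt k with hsdef
  have hs0 : 0 < s := Real.sqrt_pos.mpr (by linarith)
  have hs2 : s ^ 2 = k := Real.sq_sqrt (by linarith)
  have hs : 2 ≤ s := by nlinarith
  have hL1 : (ℓ : ℝ) ≤ s / 2 := by
    rw [hℓ]; exact Nat.floor_le (by positivity)
  have hL2 : s / 2 - 1 ≤ (ℓ : ℝ) := by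
    rw [hℓ]; have := Nat.lt_floor_add_one (s/2); push_cast; linarith
  have hℓ0 : (0:ℝ) ≤ (ℓ:ℝ) := Nat.cast_nonneg _
  rw [show (4:ℝ) - 8/s = (4*s - 8)/s by field_simp]
  rw [div_mul_div_comm, div_lt_div_iff₀ hs0 (by positivity)]
  nlinarith [mul_nonneg (mul_nonneg (sub_nonneg.2 hL2) (sub_nonneg.2 hs)) hs0.le,
    mul_nonneg (mul_nonneg (sub_nonneg.2 hL1) (sub_nonneg.2 hs)) hs0.le,
    mul_nonneg (sub_nonneg.2 hL2) (sub_nonneg.2 hs),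
    mul_nonneg (sub_nonneg.2 hL1) (sub_nonneg.2 hs),
    mul_pos hs0 hs0, sq_nonneg (s - 2)]
end

section
/- The function Λ_R(n; H, ℓ) := (1/(k+ℓ)!) ∑_{d | P_H(n), d ≤ R} μ(d) (log(R/d))^{k+ℓ} satisfies: if every prime factor of P_H(n) exceeds R^δ and each n + h_i ≤ 3N, then |Λ_R(n; H, ℓ)| ≤ 2^{k log(3N)/(δ log R)} · (log R)^{k+ℓ} / (k+ℓ)!. -/
open scoped Classical

/-- The GPY prime tuple approximation
`Λ_R(n; H, ℓ) = (1/(k+ℓ)!) ∑_{d ∣ P_H(n), d ≤ R} μ(d) (log(R/d))^{k+ℓ}`. -/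
noncomputable def LambdaR (R : ℝ) (n : ℕ) (H : Finset ℕ) (ℓ : ℕ) : ℝ :=
  (1 / (Nat.factorial (H.card + ℓ) : ℝ)) *
    ((∏ h ∈ H, (n + h)).divisors.filter (fun d : ℕ => (d : ℝ) ≤ R)).sum
      (fun d : ℕ =>
        ((ArithmeticFunction.moebius d : ℤ) : ℝ) * (Real.log (R / d)) ^ (H.card + ℓ))

/-- If every prime factor of `P_H(n)` exceeds `R^δ` and each `n + h ≤ 3N`, then
`|Λ_R(n; H, ℓ)| ≤ 2^{k log(3N)/(δ log R)}·(log R)^{k+ℓ}/(k+ℓ)!`. -/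
theorem LambdaR_bound (H : Finset ℕ) (k : ℕ) (hk : H.card = k)
    (hpos : ∀ h ∈ H, 1 ≤ h) (ℓ : ℕ) (hℓ : ℓ < k) (R : ℝ) (hR : 2 ≤ R)
    (δ : ℝ) (hδ0 : 0 < δ) (hδ1 : δ < 1) (N : ℕ) (hN : 1 ≤ N) (n : ℕ) (hn : 1 ≤ n)
    (hle : ∀ h ∈ H, n + h ≤ 3 * N)
    (hprimes : ∀ p : ℕ, p.Prime → p ∣ ∏ h ∈ H, (n + h) → R ^ δ < p) :
    |LambdaR R n H ℓ| ≤
      (2 : ℝ) ^ ((k : ℝ) * Real.log (3 * N) / (δ * Real.log R)) *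
        (Real.log R) ^ (k + ℓ) / (Nat.factorial (k + ℓ) : ℝ) := by
  set P := ∏ h ∈ H, (n + h) with hPdef
  have hP0 : P ≠ 0 := by
    rw [hPdef]
    exact Finset.prod_ne_zero_iff.mpr fun h hh => by have := hpos h hh; omega
  have hR0 : (0:ℝ) < R := lt_of_lt_of_le two_pos hR
  have hlogR : 0 < Real.log R := Real.log_pos (lt_of_lt_of_le one_lt_two hR)
  have hLnn : (0:ℝ) ≤ (Real.log R) ^ (k + ℓ) := by positivity
  set S := P.divisors.filter (fun d : ℕ => (d:ℝ) ≤ R) with hSdef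
  set f : ℕ → ℝ := fun d =>
      ((ArithmeticFunction.moebius d : ℤ) : ℝ) * (Real.log (R / d)) ^ (k + ℓ) with hfdef
  have hΛ : LambdaR R n H ℓ = (1 / (Nat.factorial (k + ℓ) : ℝ)) * S.sum f := by
    rw [LambdaR, hk]
  -- term bound on squarefree part
  have hterm : ∀ d ∈ S, |f d| ≤ (Real.log R) ^ (k + ℓ) := by
    intro d hd
    rw [hSdef, Finset.mem_filter, Nat.mem_divisors] at hd
    have hd1 : 1 ≤ d := Nat.one_le_iff_ne_zero.mpr (by rintro rfl; exact hP0 (zero_dvd_iff.mp hd.1.1))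
    have hd1' : (1:ℝ) ≤ (d:ℝ) := by exact_mod_cast hd1
    have hlog1 : 0 ≤ Real.log (R / d) := Real.log_nonneg ((one_le_div (by linarith)).mpr hd.2)
    have hlog2 : Real.log (R / d) ≤ Real.log R := by
      apply Real.log_le_log (by positivity)
      calc R / (d:ℝ) ≤ R / 1 := by apply div_le_div_of_nonneg_left <;> linarith
        _ = R := div_one R
    have hμ : |(((ArithmeticFunction.moebius d : ℤ)):ℝ)| ≤ 1 := by
      rw [← Int.cast_abs]
      exact_mod_cast ArithmeticFunction.abs_moebius_le_one
    calc |f d| = |(((ArithmeticFunction.moebius d : ℤ)):ℝ)| * |(Real.log (R / d)) ^ (k + ℓ)| :=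
          abs_mul _ _
      _ ≤ 1 * (Real.log R) ^ (k + ℓ) := by
          apply mul_le_mul hμ ?_ (abs_nonneg _) zero_le_one
          rw [abs_of_nonneg (by positivity)]
          exact pow_le_pow_left₀ hlog1 hlog2 _
      _ = (Real.log R) ^ (k + ℓ) := one_mul _
  -- restrict to squarefree
  set S' := S.filter Squarefree with hS'def
  have hsum : ∑ d ∈ S', |f d| = ∑ d ∈ S, |f d| := by
    apply Finset.sum_filter_of_ne
    intro d _ hfd
    by_contra hsq
    apply hfd
    rw [hfdef]
    simp [ArithmeticFunction.moebius_eq_zero_of_not_squarefree hsq]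
  -- card bound: S'.card ≤ 2 ^ ω(P)
  have hcard : S'.card ≤ 2 ^ P.primeFactors.card := by
    rw [← Finset.card_powerset]
    apply Finset.card_le_card_of_injOn (fun d => d.primeFactors)
    · intro d hd
      simp only [Finset.mem_coe, hS'def, Finset.mem_filter, hSdef, Nat.mem_divisors] at hd
      exact Finset.mem_powerset.mpr (Nat.primeFactors_mono hd.1.1.1 hP0)
    · intro d1 h1 d2 h2 heq
      rw [Finset.mem_coe, hS'def, Finset.mem_filter] at h1 h2
      rw [← Nat.prod_primeFactors_of_squarefree h1.2, ← Nat.prod_primeFactors_of_squarefree h2.2]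
      exact Finset.prod_congr heq (fun _ _ => rfl)
  -- ω(P) bound
  have hω : (P.primeFactors.card : ℝ) ≤ (k : ℝ) * Real.log (3 * N) / (δ * Real.log R) := by
    have hrp : (0:ℝ) < R ^ δ := Real.rpow_pos_of_pos hR0 δ
    have h1 : (R ^ δ) ^ P.primeFactors.card ≤ ((∏ p ∈ P.primeFactors, p : ℕ) : ℝ) := by
      rw [Nat.cast_prod, ← Finset.prod_const]
      apply Finset.prod_le_prod (fun _ _ => le_of_lt hrp)
      intro p hp
      exact le_of_lt (hprimes p (Nat.prime_of_mem_primeFactors hp)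
        ((Nat.prod_primeFactors_dvd P).trans dvd_rfl |> fun _ => Nat.dvd_of_mem_primeFactors hp))
    have h2 : ((∏ p ∈ P.primeFactors, p : ℕ) : ℝ) ≤ (P : ℝ) := by
      exact_mod_cast Nat.le_of_dvd (Nat.pos_of_ne_zero hP0) (Nat.prod_primeFactors_dvd P)
    have h3 : (P : ℝ) ≤ ((3 * N : ℕ) : ℝ) ^ k := by
      have : P ≤ (3 * N) ^ k := by
        rw [hPdef, ← hk]
        exact Finset.prod_le_pow_card H _ _ hle
      exact_mod_cast this
    have h3N : (1:ℝ) ≤ ((3 * N : ℕ) : ℝ) := by exact_mod_cast Nat.one_le_iff_ne_zero.mpr (by omega)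
    have hlog : (P.primeFactors.card : ℝ) * (δ * Real.log R) ≤ (k : ℝ) * Real.log (3 * N) := by
      have := Real.log_le_log (by positivity) (h1.trans (h2.trans h3))
      rw [Real.log_pow, Real.log_rpow hR0, Real.log_pow] at this
      have hcast : ((3 * N : ℕ) : ℝ) = 3 * (N : ℝ) := by push_cast; ring
      rw [hcast] at this
      linarith [this]
    rw [le_div_iff₀ (by positivity)]
    exact hlog
  -- assemble
  have hfac : (0:ℝ) < (Nat.factorial (k + ℓ) : ℝ) := by exact_mod_cast Nat.factorial_pos (k + ℓ)
  have hbig : |S.sum f| ≤ (2:ℝ) ^ ((k : ℝ) * Real.log (3 * N) / (δ * Real.log R)) *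
      (Real.log R) ^ (k + ℓ) := by
    calc |S.sum f| ≤ ∑ d ∈ S, |f d| := Finset.abs_sum_le_sum_abs _ _
      _ = ∑ d ∈ S', |f d| := hsum.symm
      _ ≤ S'.card • (Real.log R) ^ (k + ℓ) := by
          apply Finset.sum_le_card_nsmul
          intro d hd
          exact hterm d (Finset.mem_of_mem_filter d hd)
      _ = (S'.card : ℝ) * (Real.log R) ^ (k + ℓ) := by rw [nsmul_eq_mul]
      _ ≤ (2:ℝ) ^ ((k : ℝ) * Real.log (3 * N) / (δ * Real.log R)) * (Real.log R) ^ (k + ℓ) := by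
          apply mul_le_mul_of_nonneg_right _ hLnn
          calc (S'.card : ℝ) ≤ ((2 ^ P.primeFactors.card : ℕ) : ℝ) := by exact_mod_cast hcard
            _ = (2:ℝ) ^ (P.primeFactors.card : ℝ) := by
                rw [Real.rpow_natCast]; push_cast; ring
            _ ≤ (2:ℝ) ^ ((k : ℝ) * Real.log (3 * N) / (δ * Real.log R)) :=
                Real.rpow_le_rpow_of_exponent_le one_le_two hω
  rw [hΛ]
  have h1F : (0:ℝ) ≤ 1 / ((Nat.factorial (k + ℓ)) : ℝ) := by positivity
  calc |1 / ((Nat.factorial (k + ℓ)) : ℝ) * S.sum f|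
      = 1 / ((Nat.factorial (k + ℓ)) : ℝ) * |S.sum f| := by rw [abs_mul, abs_of_nonneg h1F]
    _ ≤ 1 / ((Nat.factorial (k + ℓ)) : ℝ) *
        ((2:ℝ) ^ ((k : ℝ) * Real.log (3 * N) / (δ * Real.log R)) * (Real.log R) ^ (k + ℓ)) :=
        mul_le_mul_of_nonneg_left hbig h1F
    _ = (2:ℝ) ^ ((k : ℝ) * Real.log (3 * N) / (δ * Real.log R)) *
        (Real.log R) ^ (k + ℓ) / ((Nat.factorial (k + ℓ)) : ℝ) := by ring
end
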